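/- The set of N-valid formulas is closed under modus ponens: if φ is N-valid and φ → ψ is N-valid, then ψ is N-valid. -/

import Mathlib

/- Formalization of Lorenzen dialogue games, following Felscher's presentation.

   Propositional formulas are built from atoms using ¬, ∧, ∨, →.  A dialogue
   for a formula φ is a sequence of moves beginning with Proponent (P)
   asserting φ at position 0, with O moving at odd positions and P at even
   positions.  Each later move attacks or defends an earlier move of the other
   player, according to the particle rules.  Structural rules (D10, D11, D12,
   D13, E, and the variants D10*, D10′) constrain dialogues further.  P wins
   if P made the last move and no moves are available to O; φ is S-valid if P
   has an S-winning strategy for φ. -/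

namespace LorenzenDialogues

/-- Propositional formulas: atoms, ¬, ∧, ∨, →. -/
inductive Formula : Type
  | atom : ℕ → Formula
  | neg  : Formula → Formula
  | and  : Formula → Formula → Formula
  | or   : Formula → Formula → Formula
  | imp  : Formula → Formula → Formula
deriving DecidableEq

/-- Statements: formulas together with the symbolic attacks `?`, `∧_L`, `∧_R`. -/
inductive Statement : Type
  | form  : Formula → Statement
  | qmark : Statement
  | andL  : Statement
  | andR  : Statement
deriving DecidableEq

/-- Particle rules, attack part: which statements attack which formulas. -/
inductive Attacks : Statement → Formula → Prop
  | andL (a b : Formula) : Attacks .andL (.and a b)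
  | andR (a b : Formula) : Attacks .andR (.and a b)
  | qmark (a b : Formula) : Attacks .qmark (.or a b)
  | imp (a b : Formula) : Attacks (.form a) (.imp a b)
  | neg (a : Formula) : Attacks (.form a) (.neg a)

/-- Particle rules, defense part: `Defends χ a s` means `s` is a permitted
    defense of the formula `χ` against the attack `a`.  (A negation admits
    no defense.) -/
inductive Defends : Formula → Statement → Statement → Prop
  | andL (a b : Formula) : Defends (.and a b) .andL (.form a)
  | andR (a b : Formula) : Defends (.and a b) .andR (.form b)
  | orL (a b : Formula) : Defends (.or a b) .qmark (.form a)
  | orR (a b : Formula) : Defends (.or a b) .qmark (.form b)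
  | imp (a b : Formula) : Defends (.imp a b) (.form a) (.form b)

/-- A move: a statement, a flag recording whether it is an attack (`true`)
    or a defense (`false`), and the position of the earlier move it attacks,
    resp. the earlier attack it defends against. -/
structure Move : Type where
  statement : Statement
  isAttack : Bool
  ref : ℕ
deriving DecidableEq

/-- A dialogue: the initial formula asserted by P at position 0, followed by
    the list of later moves (the move at list index `i` occupies position
    `i + 1`; O moves at odd positions, P at even positions). -/
structure Dialogue : Type where
  initial : Formula
  moves : List Move

/-- The statement asserted at position `n` (if any). -/
def Dialogue.stmtAt (d : Dialogue) (n : ℕ) : Option Statement :=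
  if n = 0 then some (.form d.initial) else (d.moves[n - 1]?).map Move.statement

/-- The move at position `n ≥ 1` (if any); position 0 is the initial assertion,
    not a move. -/
def Dialogue.moveAt (d : Dialogue) (n : ℕ) : Option Move :=
  if n = 0 then none else d.moves[n - 1]?

/-- The move `m`, played at position `n ≥ 1`, is permitted by the particle
    rules: it refers to an earlier position of the other player; if it is an
    attack, it attacks a formula asserted there, and if it is a defense, it
    responds to an attack played there, as the particle rules prescribe. -/
def MoveOK (d : Dialogue) (n : ℕ) (m : Move) : Prop :=
  m.ref < n ∧ m.ref % 2 ≠ n % 2 ∧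
    (m.isAttack = true →
      ∃ ψ, d.stmtAt m.ref = some (.form ψ) ∧ Attacks m.statement ψ) ∧
    (m.isAttack = false →
      ∃ a χ, d.moveAt m.ref = some a ∧ a.isAttack = true ∧
        d.stmtAt a.ref = some (.form χ) ∧ Defends χ a.statement m.statement)

/-- The dialogue adheres to the particle rules (every move is legal). -/
def ParticleOK (d : Dialogue) : Prop :=
  ∀ i m, d.moves[i]? = some m → MoveOK d (i + 1) m

/-- Position `n` carries a defense of the attack made at position `r`. -/
def IsDefenseOf (d : Dialogue) (n r : ℕ) : Prop :=
  ∃ m, d.moveAt n = some m ∧ m.isAttack = false ∧ m.ref = r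

/-- Position `n` carries an attack on the assertion made at position `r`. -/
def IsAttackOn (d : Dialogue) (n r : ℕ) : Prop :=
  ∃ m, d.moveAt n = some m ∧ m.isAttack = true ∧ m.ref = r

/-- Position `n` carries an attack. -/
def IsAttackPos (d : Dialogue) (n : ℕ) : Prop :=
  ∃ m, d.moveAt n = some m ∧ m.isAttack = true

/-- The attack at position `r` is still open (no defense against it has yet
    been played) before position `k`. -/
def OpenAt (d : Dialogue) (r k : ℕ) : Prop :=
  IsAttackPos d r ∧ ¬ ∃ j, j < k ∧ IsDefenseOf d j r

/-- (D10) P may assert an atomic formula only after it has been asserted by O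
    before. -/
def D10 (d : Dialogue) : Prop :=
  ∀ n p, n % 2 = 0 → d.stmtAt n = some (.form (.atom p)) →
    ∃ j, j < n ∧ j % 2 = 1 ∧ d.stmtAt j = some (.form (.atom p))

/-- (D10*) P may assert an atom `p` only if O has asserted `p` or `¬p`
    before. -/
def D10star (d : Dialogue) : Prop :=
  ∀ n p, n % 2 = 0 → d.stmtAt n = some (.form (.atom p)) →
    ∃ j, j < n ∧ j % 2 = 1 ∧
      (d.stmtAt j = some (.form (.atom p)) ∨
        d.stmtAt j = some (.form (.neg (.atom p))))

/-- (D10′) P may assert an atom `p` only if O has asserted `p` or `¬¬p`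
    before. -/
def D10prime (d : Dialogue) : Prop :=
  ∀ n p, n % 2 = 0 → d.stmtAt n = some (.form (.atom p)) →
    ∃ j, j < n ∧ j % 2 = 1 ∧
      (d.stmtAt j = some (.form (.atom p)) ∨
        d.stmtAt j = some (.form (.neg (.neg (.atom p)))))

/-- (D11) When defending, only the most recent open attack may be responded
    to: the attack defended against is open, and no strictly more recent open
    attack (against the same player) exists. -/
def D11 (d : Dialogue) : Prop :=
  ∀ n r, IsDefenseOf d n r →
    OpenAt d r n ∧ ¬ ∃ r', r < r' ∧ r' < n ∧ r' % 2 = r % 2 ∧ OpenAt d r' n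

/-- (D12) An attack may be answered at most once. -/
def D12 (d : Dialogue) : Prop :=
  ∀ n₁ n₂ r, IsDefenseOf d n₁ r → IsDefenseOf d n₂ r → n₁ = n₂

/-- (D13) A P-assertion (made at an even position) may be attacked at most
    once. -/
def D13 (d : Dialogue) : Prop :=
  ∀ n₁ n₂ r, r % 2 = 0 → IsAttackOn d n₁ r → IsAttackOn d n₂ r → n₁ = n₂

/-- (E) O can react only upon the immediately preceding P-statement. -/
def ERule (d : Dialogue) : Prop :=
  ∀ n m, n % 2 = 1 → d.moveAt n = some m → m.ref = n - 1

/-- A ruleset is a set of structural rules, i.e. a predicate on dialogues. -/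
def Ruleset := Dialogue → Prop

/-- Ruleset D = {D10, D11, D12, D13}. -/
def rulesetD : Ruleset := fun d => D10 d ∧ D11 d ∧ D12 d ∧ D13 d

/-- Ruleset E = D ∪ {E}. -/
def rulesetE : Ruleset := fun d => rulesetD d ∧ ERule d

/-- Ruleset CL = E − {D11, D12} = {D10, D13, E}. -/
def rulesetCL : Ruleset := fun d => D10 d ∧ D13 d ∧ ERule d

/-- Ruleset N = D − {D11, D12} = {D10, D13}. -/
def rulesetN : Ruleset := fun d => D10 d ∧ D13 d

/-- Ruleset E* = {D10*, D11, D12, D13, E}. -/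
def rulesetEstar : Ruleset :=
  fun d => D10star d ∧ D11 d ∧ D12 d ∧ D13 d ∧ ERule d

/-- Ruleset E′ = {D10′, D11, D12, D13, E}. -/
def rulesetEprime : Ruleset :=
  fun d => D10prime d ∧ D11 d ∧ D12 d ∧ D13 d ∧ ERule d

/-- An S-dialogue: a dialogue adhering to the particle rules and to the
    structural rules S. -/
def Legal (S : Ruleset) (d : Dialogue) : Prop := ParticleOK d ∧ S d

/-- Extend a dialogue by one move. -/
def Dialogue.extend (d : Dialogue) (m : Move) : Dialogue :=
  ⟨d.initial, d.moves ++ [m]⟩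

/-- The position about to be played. -/
def nextPos (d : Dialogue) : ℕ := d.moves.length + 1

/-- It is P's turn (the next position is even). -/
def PTurn (d : Dialogue) : Prop := nextPos d % 2 = 0

/-- The move `m` legally extends the S-dialogue `d`. -/
def LegalExt (S : Ruleset) (d : Dialogue) (m : Move) : Prop :=
  Legal S (d.extend m)

/-- `PWinningC S C d` holds when P, moving under the additional constraint
    `C` on P's own choices, has a winning strategy in the S-dialogue game
    continuing the dialogue `d`: at P's turn, P has a legal move (satisfying
    `C`) after which P is still winning; at O's turn, every legal O-move
    leads to a position where P is winning (in particular, if no O-move is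
    available, P has won: P made the last move and O cannot move). -/
inductive PWinningC (S : Ruleset) (C : Dialogue → Move → Prop) : Dialogue → Prop
  | pMove (d : Dialogue) (m : Move) (hturn : PTurn d)
      (hm : LegalExt S d m) (hC : C d m)
      (h : PWinningC S C (d.extend m)) : PWinningC S C d
  | oMoves (d : Dialogue) (hturn : ¬ PTurn d)
      (h : ∀ m, LegalExt S d m → PWinningC S C (d.extend m)) :
      PWinningC S C d

/-- P has a winning strategy continuing the S-dialogue `d`. -/
def PWinning (S : Ruleset) (d : Dialogue) : Prop :=
  PWinningC S (fun _ _ => True) d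

/-- `valid S φ` (written `⊨_S φ`): the opening assertion of φ is itself a
    legal S-dialogue and P has an S-winning strategy for φ. -/
def valid (S : Ruleset) (φ : Formula) : Prop :=
  Legal S ⟨φ, []⟩ ∧ PWinning S ⟨φ, []⟩

/-- Derivability in intuitionistic propositional logic (a Hilbert-style
    axiomatization with modus ponens). -/
inductive IProv : Formula → Prop
  | k (a b : Formula) : IProv (.imp a (.imp b a))
  | s (a b c : Formula) :
      IProv (.imp (.imp a (.imp b c)) (.imp (.imp a b) (.imp a c)))
  | andE1 (a b : Formula) : IProv (.imp (.and a b) a)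
  | andE2 (a b : Formula) : IProv (.imp (.and a b) b)
  | andI (a b : Formula) : IProv (.imp a (.imp b (.and a b)))
  | orI1 (a b : Formula) : IProv (.imp a (.or a b))
  | orI2 (a b : Formula) : IProv (.imp b (.or a b))
  | orE (a b c : Formula) :
      IProv (.imp (.imp a c) (.imp (.imp b c) (.imp (.or a b) c)))
  | negI (a b : Formula) :
      IProv (.imp (.imp a b) (.imp (.imp a (.neg b)) (.neg a)))
  | negE (a b : Formula) : IProv (.imp (.neg a) (.imp a b))
  | mp (a b : Formula) : IProv (.imp a b) → IProv a → IProv b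

/-- The stability principle ¬¬p → p for the atom `p`. -/
def stab (p : ℕ) : Formula := .imp (.neg (.neg (.atom p))) (.atom p)

/-- Stable logic: intuitionistic propositional logic plus all instances of
    the stability scheme ¬¬p → p for atoms p, closed under modus ponens. -/
inductive StableProv : Formula → Prop
  | intuit (a : Formula) : IProv a → StableProv a
  | stab (p : ℕ) : StableProv (stab p)
  | mp (a b : Formula) : StableProv (.imp a b) → StableProv a → StableProv b

/-- Boolean evaluation of a formula under a valuation of its atoms. -/
def Formula.eval (v : ℕ → Bool) : Formula → Bool
  | .atom p => v p
  | .neg a => !(a.eval v)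
  | .and a b => a.eval v && b.eval v
  | .or a b => a.eval v || b.eval v
  | .imp a b => !(a.eval v) || b.eval v

/-- A classical tautology: true under every Boolean valuation. -/
def Tautology (φ : Formula) : Prop := ∀ v, φ.eval v = true

/-- Uniform substitution of formulas for atoms, applied homomorphically. -/
def Formula.subst (σ : ℕ → Formula) : Formula → Formula
  | .atom p => σ p
  | .neg a => .neg (a.subst σ)
  | .and a b => .and (a.subst σ) (b.subst σ)
  | .or a b => .or (a.subst σ) (b.subst σ)
  | .imp a b => .imp (a.subst σ) (b.subst σ)

/-- The atoms occurring in a formula. -/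
def Formula.atoms : Formula → List ℕ
  | .atom p => [p]
  | .neg a => a.atoms
  | .and a b => a.atoms ++ b.atoms
  | .or a b => a.atoms ++ b.atoms
  | .imp a b => a.atoms ++ b.atoms

/-- Conjunction of a nonempty list of formulas. -/
def conjList (f : Formula) : List Formula → Formula
  | [] => f
  | g :: gs => .and f (conjList g gs)

/-- The conjunction (¬¬p → p) ∧ … of stability instances for the atoms
    `p :: ps`. -/
def stabConj (p : ℕ) (ps : List ℕ) : Formula :=
  conjList (stab p) (ps.map stab)


/-! ### Auxiliary development for modus ponens -/

namespace NMP

abbrev FPred := Formula → Prop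
abbrev BPred := Formula → Statement → Prop

abbrev AddA (A : FPred) (x : Formula) : FPred := fun y => y = x ∨ A y
abbrev AddB (B : BPred) (χ : Formula) (s : Statement) : BPred :=
  fun χ' s' => (χ' = χ ∧ s' = s) ∨ B χ' s'

def Provide (A : FPred) (B : BPred) (f : Formula) : Prop :=
  (∃ χ s, B χ s ∧ Defends χ s (.form f)) ∨ A (.neg f)

/-- Abstract winning states of the N-dialogue game: it is P's turn, `A` is the
set of formulas asserted by O, `B` the set of attacks O has made on P-asserted
formulas, and every non-atomic P-assertion has already been attacked. -/
inductive Win : FPred → BPred → Prop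
  | watom {A B} (p) : Provide A B (.atom p) → A (.atom p) → Win A B
  | wand {A B} (a b) : Provide A B (.and a b) →
      Win A (AddB B (.and a b) .andL) → Win A (AddB B (.and a b) .andR) → Win A B
  | wor {A B} (a b) : Provide A B (.or a b) → Win A (AddB B (.or a b) .qmark) → Win A B
  | wimp {A B} (a b) : Provide A B (.imp a b) →
      Win (AddA A a) (AddB B (.imp a b) (.form a)) → Win A B
  | wneg {A B} (c) : Provide A B (.neg c) → Win (AddA A c) B → Win A B

/-- P wins after asserting `f` in state `(A, B)`, whatever O's attack. -/
def BranchRes : Formula → FPred → BPred → Prop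
  | .atom p, A, _ => A (.atom p)
  | .and a b, A, B => Win A (AddB B (.and a b) .andL) ∧ Win A (AddB B (.and a b) .andR)
  | .or a b, A, B => Win A (AddB B (.or a b) .qmark)
  | .imp a b, A, B => Win (AddA A a) (AddB B (.imp a b) (.form a))
  | .neg c, A, B => Win (AddA A c) B

theorem Provide.mono {A B A' B' f} (h : Provide A B f)
    (hA : ∀ x, A x → A' x) (hB : ∀ χ s, B χ s → B' χ s) : Provide A' B' f := by
  rcases h with ⟨χ, s, hb, hd⟩ | hn
  · exact Or.inl ⟨χ, s, hB _ _ hb, hd⟩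
  · exact Or.inr (hA _ hn)

theorem Win.mono {A B} (h : Win A B) : ∀ {A' B' : _}, (∀ x, A x → A' x) →
    (∀ χ s, B χ s → B' χ s) → Win A' B' := by
  induction h with
  | watom p hp ha => exact fun hA hB => Win.watom p (hp.mono hA hB) (hA _ ha)
  | wand a b hp _ _ ih1 ih2 =>
      exact fun hA hB => Win.wand a b (hp.mono hA hB)
        (ih1 hA (fun χ s h => h.imp id (hB χ s)))
        (ih2 hA (fun χ s h => h.imp id (hB χ s)))
  | wor a b hp _ ih =>
      exact fun hA hB => Win.wor a b (hp.mono hA hB) (ih hA (fun χ s h => h.imp id (hB χ s)))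
  | wimp a b hp _ ih =>
      exact fun hA hB => Win.wimp a b (hp.mono hA hB)
        (ih (fun x h => h.imp id (hA x)) (fun χ s h => h.imp id (hB χ s)))
  | wneg c hp _ ih =>
      exact fun hA hB => Win.wneg c (hp.mono hA hB) (ih (fun x h => h.imp id (hA x)) hB)

theorem BranchRes.mono {f A B A' B'} (h : BranchRes f A B)
    (hA : ∀ x, A x → A' x) (hB : ∀ χ s, B χ s → B' χ s) : BranchRes f A' B' := by
  cases f with
  | atom p => exact hA _ h
  | and a b => exact ⟨h.1.mono hA (fun χ s h => h.imp id (hB χ s)),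
      h.2.mono hA (fun χ s h => h.imp id (hB χ s))⟩
  | or a b => exact Win.mono h hA (fun χ s h => h.imp id (hB χ s))
  | imp a b => exact Win.mono h (fun x h => h.imp id (hA x)) (fun χ s h => h.imp id (hB χ s))
  | neg c => exact Win.mono h (fun x h => h.imp id (hA x)) hB

/-- Attacks on O-asserted formulas without an answer (e.g. on negations) can be
dropped from `B`. -/
theorem Win.dropB {A B} (h : Win A B) : ∀ {B' : BPred},
    (∀ χ s, B χ s → (∃ f, Defends χ s (.form f)) → B' χ s) → Win A B' := by
  induction h with
  | watom p hp ha =>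
      intro B' hB
      rcases hp with ⟨χ, s, hb, hd⟩ | hn
      · exact Win.watom p (Or.inl ⟨χ, s, hB _ _ hb ⟨_, hd⟩, hd⟩) ha
      · exact Win.watom p (Or.inr hn) ha
  | wand a b hp _ _ ih1 ih2 =>
      intro B' hB
      refine Win.wand a b ?_ (ih1 ?_) (ih2 ?_)
      · rcases hp with ⟨χ, s, hb, hd⟩ | hn
        · exact Or.inl ⟨χ, s, hB _ _ hb ⟨_, hd⟩, hd⟩
        · exact Or.inr hn
      all_goals exact fun χ s h hd => h.imp id (fun h' => hB χ s h' hd)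
  | wor a b hp _ ih =>
      intro B' hB
      refine Win.wor a b ?_ (ih ?_)
      · rcases hp with ⟨χ, s, hb, hd⟩ | hn
        · exact Or.inl ⟨χ, s, hB _ _ hb ⟨_, hd⟩, hd⟩
        · exact Or.inr hn
      · exact fun χ s h hd => h.imp id (fun h' => hB χ s h' hd)
  | wimp a b hp _ ih =>
      intro B' hB
      refine Win.wimp a b ?_ (ih ?_)
      · rcases hp with ⟨χ, s, hb, hd⟩ | hn
        · exact Or.inl ⟨χ, s, hB _ _ hb ⟨_, hd⟩, hd⟩
        · exact Or.inr hn
      · exact fun χ s h hd => h.imp id (fun h' => hB χ s h' hd)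
  | wneg c hp _ ih =>
      intro B' hB
      refine Win.wneg c ?_ (ih hB)
      rcases hp with ⟨χ, s, hb, hd⟩ | hn
      · exact Or.inl ⟨χ, s, hB _ _ hb ⟨_, hd⟩, hd⟩
      · exact Or.inr hn

/-- An O-concession which is neither an atom nor a negation is inert and can be
dropped. -/
theorem Win.dropA {A₁ B} (g : Formula) (hg : ∀ c, g ≠ .neg c) (hg2 : ∀ p, g ≠ .atom p)
    (h : Win A₁ B) : ∀ {A : FPred}, (∀ x, A₁ x → x = g ∨ A x) → Win A B := by
  induction h with
  | watom p hp ha =>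
      intro A hA
      refine Win.watom p ?_ ?_
      · rcases hp with hl | hn
        · exact Or.inl hl
        · rcases hA _ hn with h | h
          · exact absurd h.symm (hg _)
          · exact Or.inr h
      · rcases hA _ ha with h | h
        · exact absurd h.symm (hg2 _)
        · exact h
  | wand a b hp _ _ ih1 ih2 =>
      intro A hA
      refine Win.wand a b ?_ (ih1 hA) (ih2 hA)
      rcases hp with hl | hn
      · exact Or.inl hl
      · rcases hA _ hn with h | h
        · exact absurd h.symm (hg _)
        · exact Or.inr h
  | wor a b hp _ ih =>
      intro A hA
      refine Win.wor a b ?_ (ih hA)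
      rcases hp with hl | hn
      · exact Or.inl hl
      · rcases hA _ hn with h | h
        · exact absurd h.symm (hg _)
        · exact Or.inr h
  | wimp a b hp _ ih =>
      intro A hA
      refine Win.wimp a b ?_ (ih ?_)
      · rcases hp with hl | hn
        · exact Or.inl hl
        · rcases hA _ hn with h | h
          · exact absurd h.symm (hg _)
          · exact Or.inr h
      · intro x hx
        rcases hx with h | h
        · exact Or.inr (Or.inl h)
        · exact (hA x h).imp id Or.inr
  | wneg c hp _ ih =>
      intro A hA
      refine Win.wneg c ?_ (ih ?_)
      · rcases hp with hl | hn
        · exact Or.inl hl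
        · rcases hA _ hn with h | h
          · exact absurd h.symm (hg _)
          · exact Or.inr h
      · intro x hx
        rcases hx with h | h
        · exact Or.inr (Or.inl h)
        · exact (hA x h).imp id Or.inr

/-- Cut: if P can win having asserted `χ` (in state `(A,B)`), then an
O-concession of `χ` can be eliminated. -/
theorem cutAux (χ : Formula)
    (outer : ∀ c, χ = .neg c → ∀ (A : FPred) (B : BPred), BranchRes c A B →
      ∀ (A₁ : FPred) (B₁ : BPred), Win A₁ B₁ → (∀ x, A₁ x → x = c ∨ A x) →
        (∀ e s, B₁ e s → B e s) → Win A B)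
    {A₁ B₁} (h : Win A₁ B₁) :
    ∀ (A : FPred) (B : BPred), (∀ x, A₁ x → x = χ ∨ A x) → (∀ e s, B₁ e s → B e s) →
      BranchRes χ A B → Win A B := by
  induction h with
  | watom p hp ha =>
      intro A B hA hB hbr
      have hmem : A (.atom p) := by
        rcases hA _ ha with h | h
        · subst h; exact hbr
        · exact h
      rcases hp with ⟨e, s, hb, hd⟩ | hn
      · exact Win.watom p (Or.inl ⟨e, s, hB _ _ hb, hd⟩) hmem
      · rcases hA _ hn with h | h
        · subst h
          exact Win.mono hbr (fun x hx => hx.elim (fun e => e ▸ hmem) id) (fun _ _ => id)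
        · exact Win.watom p (Or.inr h) hmem
  | wand a b hp _ _ ih1 ih2 =>
      intro A B hA hB hbr
      have hord : Provide A B (.and a b) → Win A B := by
        intro hprov
        refine Win.wand a b hprov ?_ ?_
        · exact ih1 A _ hA (fun e s h => h.imp id (hB e s))
            (hbr.mono (fun _ => id) (fun _ _ => Or.inr))
        · exact ih2 A _ hA (fun e s h => h.imp id (hB e s))
            (hbr.mono (fun _ => id) (fun _ _ => Or.inr))
      rcases hp with ⟨e, s, hb, hd⟩ | hn
      · exact hord (Or.inl ⟨e, s, hB _ _ hb, hd⟩)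
      · rcases hA _ hn with h | h
        · subst h
          exact Win.dropA (.and a b) (fun c => by simp) (fun p => by simp) hbr
            (fun x hx => hx)
        · exact hord (Or.inr h)
  | wor a b hp _ ih =>
      intro A B hA hB hbr
      have hord : Provide A B (.or a b) → Win A B := by
        intro hprov
        exact Win.wor a b hprov (ih A _ hA (fun e s h => h.imp id (hB e s))
          (hbr.mono (fun _ => id) (fun _ _ => Or.inr)))
      rcases hp with ⟨e, s, hb, hd⟩ | hn
      · exact hord (Or.inl ⟨e, s, hB _ _ hb, hd⟩)
      · rcases hA _ hn with h | h
        · subst h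
          exact Win.dropA (.or a b) (fun c => by simp) (fun p => by simp) hbr
            (fun x hx => hx)
        · exact hord (Or.inr h)
  | wimp a b hp _ ih =>
      intro A B hA hB hbr
      have hord : Provide A B (.imp a b) → Win A B := by
        intro hprov
        refine Win.wimp a b hprov (ih (AddA A a) _ ?_ (fun e s h => h.imp id (hB e s))
          (hbr.mono (fun _ => Or.inr) (fun _ _ => Or.inr)))
        exact fun x hx => hx.elim (fun e => Or.inr (Or.inl e))
          (fun h => (hA x h).imp id Or.inr)
      rcases hp with ⟨e, s, hb, hd⟩ | hn
      · exact hord (Or.inl ⟨e, s, hB _ _ hb, hd⟩)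
      · rcases hA _ hn with h | h
        · subst h
          exact Win.dropA (.imp a b) (fun c => by simp) (fun p => by simp) hbr
            (fun x hx => hx)
        · exact hord (Or.inr h)
  | @wneg A₂ B₂ c hp _ ih =>
      intro A B hA hB hbr
      have hAlift : ∀ x, AddA A₂ c x → x = χ ∨ AddA A c x :=
        fun x hx => hx.elim (fun e => Or.inr (Or.inl e))
          (fun h => (hA x h).imp id Or.inr)
      have hord : Provide A B (.neg c) → Win A B := by
        intro hprov
        exact Win.wneg c hprov (ih (AddA A c) _ hAlift hB
          (hbr.mono (fun _ => Or.inr) (fun _ _ => id)))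
      rcases hp with ⟨e, s, hb, hd⟩ | hn
      · exact hord (Or.inl ⟨e, s, hB _ _ hb, hd⟩)
      · rcases hA _ hn with h | h
        · -- role swap: χ = ¬¬c
          subst h
          have W1 : Win (AddA A c) B := by
            refine ih (AddA A c) B hAlift hB ?_
            show Win (AddA (AddA A c) (.neg c)) B
            exact Win.mono hbr (fun x hx => hx.imp id Or.inr) (fun _ _ => id)
          exact outer (.neg c) rfl A B W1 _ _ hbr (fun x hx => hx) (fun _ _ => id)
        · exact hord (Or.inr h)

theorem cut (χ : Formula) : ∀ (A : FPred) (B : BPred), BranchRes χ A B →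
    ∀ (A₁ : FPred) (B₁ : BPred), Win A₁ B₁ → (∀ x, A₁ x → x = χ ∨ A x) →
      (∀ e s, B₁ e s → B e s) → Win A B := by
  induction χ with
  | neg c ih =>
      intro A B hbr A₁ B₁ h hA hB
      refine cutAux _ ?_ h A B hA hB hbr
      intro c' hc'
      cases hc'
      exact ih
  | atom p =>
      intro A B hbr A₁ B₁ h hA hB
      exact cutAux _ (fun c hc => by cases hc) h A B hA hB hbr
  | and a b _ _ =>
      intro A B hbr A₁ B₁ h hA hB
      exact cutAux _ (fun c hc => by cases hc) h A B hA hB hbr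
  | or a b _ _ =>
      intro A B hbr A₁ B₁ h hA hB
      exact cutAux _ (fun c hc => by cases hc) h A B hA hB hbr
  | imp a b _ _ =>
      intro A B hbr A₁ B₁ h hA hB
      exact cutAux _ (fun c hc => by cases hc) h A B hA hB hbr

/-- What O concedes when attacking `ψ` with `s₀`. -/
def ConcOf (ψ : Formula) (s₀ : Statement) : FPred :=
  fun x => s₀ = .form x ∧ ((∃ b, ψ = .imp x b) ∨ ψ = .neg x)

/-- Eliminating the entry recording O's attack on `φ → ψ`, replacing it by the
entry recording O's (fixed) attack `s₀` on `ψ`. -/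
theorem eep (φ ψ : Formula) (s₀ : Statement) (hs₀ : Attacks s₀ ψ)
    (hna : ∀ p, ψ ≠ .atom p) :
    ∀ {A₁ B₁}, Win A₁ B₁ → ∀ (A : FPred) (B : BPred), (∀ x, A₁ x → A x) →
      (∀ e s, B₁ e s → (e = .imp φ ψ ∧ s = .form φ) ∨ B e s) →
      ((∃ f, Defends ψ s₀ (.form f)) → B ψ s₀) →
      (∀ x, ConcOf ψ s₀ x → A x) → Win A B := by
  intro A₁ B₁ h
  induction h with
  | watom p hp ha =>
      intro A B hA hB hB0 hconc
      rcases hp with ⟨e, s, hb, hd⟩ | hn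
      · rcases hB _ _ hb with ⟨rfl, rfl⟩ | hbs
        · cases hd
          exact absurd rfl (hna p)
        · exact Win.watom p (Or.inl ⟨e, s, hbs, hd⟩) (hA _ ha)
      · exact Win.watom p (Or.inr (hA _ hn)) (hA _ ha)
  | wand a b hp _ _ ih1 ih2 =>
      intro A B hA hB hB0 hconc
      have hord : Provide A B (.and a b) → Win A B := by
        intro hprov
        refine Win.wand a b hprov ?_ ?_
        · exact ih1 A _ hA (fun e s h => h.elim (fun h' => Or.inr (Or.inl h'))
            (fun h' => (hB e s h').imp id Or.inr)) (fun he => Or.inr (hB0 he))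
            (fun x hx => hconc x hx)
        · exact ih2 A _ hA (fun e s h => h.elim (fun h' => Or.inr (Or.inl h'))
            (fun h' => (hB e s h').imp id Or.inr)) (fun he => Or.inr (hB0 he))
            (fun x hx => hconc x hx)
      rcases hp with ⟨e, s, hb, hd⟩ | hn
      · rcases hB _ _ hb with ⟨rfl, rfl⟩ | hbs
        · -- the entry: σ asserts ψ = a ∧ b
          cases hd
          cases hs₀ with
          | andL a b =>
              refine ih1 A B hA ?_ hB0 hconc
              intro e s h
              rcases h with ⟨rfl, rfl⟩ | h
              · exact Or.inr (hB0 ⟨a, Defends.andL a b⟩)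
              · exact hB _ _ h
          | andR a b =>
              refine ih2 A B hA ?_ hB0 hconc
              intro e s h
              rcases h with ⟨rfl, rfl⟩ | h
              · exact Or.inr (hB0 ⟨b, Defends.andR a b⟩)
              · exact hB _ _ h
        · exact hord (Or.inl ⟨e, s, hbs, hd⟩)
      · exact hord (Or.inr (hA _ hn))
  | wor a b hp _ ih =>
      intro A B hA hB hB0 hconc
      have hord : Provide A B (.or a b) → Win A B := by
        intro hprov
        exact Win.wor a b hprov (ih A _ hA (fun e s h => h.elim
          (fun h' => Or.inr (Or.inl h')) (fun h' => (hB e s h').imp id Or.inr))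
          (fun he => Or.inr (hB0 he)) (fun x hx => hconc x hx))
      rcases hp with ⟨e, s, hb, hd⟩ | hn
      · rcases hB _ _ hb with ⟨rfl, rfl⟩ | hbs
        · cases hd
          cases hs₀ with
          | qmark a b =>
              refine ih A B hA ?_ hB0 hconc
              intro e s h
              rcases h with ⟨rfl, rfl⟩ | h
              · exact Or.inr (hB0 ⟨a, Defends.orL a b⟩)
              · exact hB _ _ h
        · exact hord (Or.inl ⟨e, s, hbs, hd⟩)
      · exact hord (Or.inr (hA _ hn))
  | wimp a b hp _ ih =>
      intro A B hA hB hB0 hconc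
      have hord : Provide A B (.imp a b) → Win A B := by
        intro hprov
        refine Win.wimp a b hprov (ih (AddA A a) _ ?_ (fun e s h => h.elim
          (fun h' => Or.inr (Or.inl h')) (fun h' => (hB e s h').imp id Or.inr))
          (fun he => Or.inr (hB0 he)) (fun x hx => Or.inr (hconc x hx)))
        exact fun x hx => hx.imp id (hA x)
      rcases hp with ⟨e, s, hb, hd⟩ | hn
      · rcases hB _ _ hb with ⟨rfl, rfl⟩ | hbs
        · cases hd
          cases hs₀ with
          | imp a b =>
              refine ih A B ?_ ?_ hB0 hconc
              · intro x hx
                rcases hx with rfl | hx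
                · exact hconc x ⟨rfl, Or.inl ⟨b, rfl⟩⟩
                · exact hA _ hx
              · intro e s h
                rcases h with ⟨rfl, rfl⟩ | h
                · exact Or.inr (hB0 ⟨b, Defends.imp a b⟩)
                · exact hB _ _ h
        · exact hord (Or.inl ⟨e, s, hbs, hd⟩)
      · exact hord (Or.inr (hA _ hn))
  | wneg c hp _ ih =>
      intro A B hA hB hB0 hconc
      have hord : Provide A B (.neg c) → Win A B := by
        intro hprov
        refine Win.wneg c hprov (ih (AddA A c) _ ?_ hB
          (fun he => hB0 he) (fun x hx => Or.inr (hconc x hx)))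
        exact fun x hx => hx.imp id (hA x)
      rcases hp with ⟨e, s, hb, hd⟩ | hn
      · rcases hB _ _ hb with ⟨rfl, rfl⟩ | hbs
        · cases hd
          cases hs₀ with
          | neg c =>
              refine ih A B ?_ hB hB0 hconc
              intro x hx
              rcases hx with rfl | hx
              · exact hconc x ⟨rfl, Or.inr rfl⟩
              · exact hA _ hx
        · exact hord (Or.inl ⟨e, s, hbs, hd⟩)
      · exact hord (Or.inr (hA _ hn))

/-- Abstract validity: the state after P's initial assertion of `θ`. -/
def AbsValid (θ : Formula) : Prop :=
  BranchRes θ (fun _ => False) (fun _ _ => False)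

theorem absValid_not_atom {θ : Formula} (h : AbsValid θ) : ∀ p, θ ≠ .atom p := by
  intro p he
  subst he
  exact h

theorem absMP {φ ψ : Formula} (hφ : AbsValid φ) (hi : AbsValid (.imp φ ψ)) :
    AbsValid ψ := by
  have σ0 : Win (AddA (fun _ => False) φ)
      (AddB (fun _ _ => False) (.imp φ ψ) (.form φ)) := hi
  have W : Win (fun _ => False) (AddB (fun _ _ => False) (.imp φ ψ) (.form φ)) := by
    refine cut φ _ _ (hφ.mono (fun _ => id) (fun _ _ h => h.elim)) _ _ σ0 ?_
      (fun _ _ => id)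
    exact fun x hx => hx.imp id id
  have hkey : ∀ F, Provide (fun _ => False) (AddB (fun _ _ => False)
      (.imp φ ψ) (.form φ)) F → F = ψ := by
    rintro F (⟨e, s, (⟨rfl, rfl⟩ | h), hd⟩ | hn)
    · cases hd; rfl
    · exact h.elim
    · exact hn.elim
  have hna : ∀ p, ψ ≠ .atom p := by
    intro p he
    cases W with
    | watom q hp ha => exact ha
    | wand a b hp _ _ => exact by cases (hkey _ hp).trans he
    | wor a b hp _ => exact by cases (hkey _ hp).trans he
    | wimp a b hp _ => exact by cases (hkey _ hp).trans he
    | wneg c hp _ => exact by cases (hkey _ hp).trans he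
  have hmap : ∀ (B : BPred) e s, (AddB (fun _ _ => False) (.imp φ ψ) (.form φ)) e s →
      (e = .imp φ ψ ∧ s = .form φ) ∨ B e s := by
    rintro B e s (⟨rfl, rfl⟩ | h)
    · exact Or.inl ⟨rfl, rfl⟩
    · exact h.elim
  cases hψ : ψ with
  | atom p => exact absurd hψ (hna p)
  | and a b =>
      subst hψ
      constructor
      · exact eep φ _ .andL (Attacks.andL a b) hna W _ _ (fun _ h => h.elim)
          (hmap _) (fun _ => Or.inl ⟨rfl, rfl⟩) (fun x hx => by cases hx.1)
      · exact eep φ _ .andR (Attacks.andR a b) hna W _ _ (fun _ h => h.elim)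
          (hmap _) (fun _ => Or.inl ⟨rfl, rfl⟩) (fun x hx => by cases hx.1)
  | or a b =>
      subst hψ
      exact eep φ _ .qmark (Attacks.qmark a b) hna W _ _ (fun _ h => h.elim)
        (hmap _) (fun _ => Or.inl ⟨rfl, rfl⟩) (fun x hx => by cases hx.1)
  | imp a b =>
      subst hψ
      refine eep φ _ (.form a) (Attacks.imp a b) hna W _ _ (fun _ h => h.elim)
        (hmap _) (fun _ => Or.inl ⟨rfl, rfl⟩) ?_
      rintro x ⟨hx, ⟨b', hb'⟩ | hn⟩
      · cases hx; cases hb'; exact Or.inl rfl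
      · cases hn -- impossible: imp ≠ neg
  | neg c =>
      subst hψ
      refine eep φ _ (.form c) (Attacks.neg c) hna W _ _ (fun _ h => h.elim)
        (fun e s h => (hmap (fun _ _ => False) e s h).imp id (fun h' => h'.elim)) ?_ ?_
      · rintro ⟨f, hf⟩; cases hf
      · rintro x ⟨hx, ⟨b', hb'⟩ | hn⟩
        · cases hb'
        · cases hx; cases hn; exact Or.inl rfl

/-! ### Basic dialogue lemmas -/

theorem stmtAt_some_le {d : Dialogue} {n : ℕ} {x : Statement}
    (h : d.stmtAt n = some x) : n ≤ d.moves.length := by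
  unfold Dialogue.stmtAt at h
  split at h
  · omega
  · rcases Option.map_eq_some_iff.1 h with ⟨mv, hmv, _⟩
    obtain ⟨hlt, -⟩ := List.getElem?_eq_some_iff.1 hmv
    omega

theorem moveAt_some_le {d : Dialogue} {n : ℕ} {mv : Move}
    (h : d.moveAt n = some mv) : 1 ≤ n ∧ n ≤ d.moves.length := by
  unfold Dialogue.moveAt at h
  split at h
  · exact absurd h (by simp)
  · obtain ⟨hlt, -⟩ := List.getElem?_eq_some_iff.1 h
    omega

theorem moves_extend (d : Dialogue) (m : Move) :
    (d.extend m).moves = d.moves ++ [m] := rfl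

theorem moveAt_extend_le {d : Dialogue} {m : Move} {n : ℕ}
    (h : n ≤ d.moves.length) : (d.extend m).moveAt n = d.moveAt n := by
  unfold Dialogue.moveAt
  split
  · rfl
  · show (d.moves ++ [m])[n-1]? = _
    rw [List.getElem?_append_left (by omega)]

theorem moveAt_extend_eq (d : Dialogue) (m : Move) :
    (d.extend m).moveAt (d.moves.length + 1) = some m := by
  unfold Dialogue.moveAt
  split
  · omega
  · show (d.moves ++ [m])[d.moves.length + 1 - 1]? = some m
    simp

theorem moveAt_extend_cases {d : Dialogue} {m : Move} {n : ℕ} {mv : Move}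
    (h : (d.extend m).moveAt n = some mv) :
    d.moveAt n = some mv ∨ (n = d.moves.length + 1 ∧ mv = m) := by
  rcases moveAt_some_le h with ⟨h1, h2⟩
  rw [moves_extend] at h2
  simp at h2
  by_cases hn : n ≤ d.moves.length
  · rw [moveAt_extend_le hn] at h
    exact Or.inl h
  · have : n = d.moves.length + 1 := by omega
    subst this
    rw [moveAt_extend_eq] at h
    exact Or.inr ⟨rfl, (Option.some_inj.1 h).symm⟩

theorem stmtAt_extend_le {d : Dialogue} {m : Move} {n : ℕ}
    (h : n ≤ d.moves.length) : (d.extend m).stmtAt n = d.stmtAt n := by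
  unfold Dialogue.stmtAt
  split
  · rfl
  · show ((d.moves ++ [m])[n-1]?).map _ = _
    rw [List.getElem?_append_left (by omega)]

theorem stmtAt_extend_eq (d : Dialogue) (m : Move) :
    (d.extend m).stmtAt (d.moves.length + 1) = some m.statement := by
  unfold Dialogue.stmtAt
  split
  · omega
  · show ((d.moves ++ [m])[d.moves.length + 1 - 1]?).map _ = _
    simp

theorem stmtAt_extend_cases {d : Dialogue} {m : Move} {n : ℕ} {x : Statement}
    (h : (d.extend m).stmtAt n = some x) :
    d.stmtAt n = some x ∨ (n = d.moves.length + 1 ∧ x = m.statement) := by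
  have hle := stmtAt_some_le h
  rw [moves_extend] at hle
  simp at hle
  by_cases hn : n ≤ d.moves.length
  · rw [stmtAt_extend_le hn] at h
    exact Or.inl h
  · have : n = d.moves.length + 1 := by omega
    subst this
    rw [stmtAt_extend_eq] at h
    exact Or.inr ⟨rfl, (Option.some_inj.1 h).symm⟩

theorem particle_moveAt {d : Dialogue} (hp : ParticleOK d) {n : ℕ} {a : Move}
    (h : d.moveAt n = some a) : MoveOK d n a := by
  rcases moveAt_some_le h with ⟨h1, h2⟩
  have hg : d.moves[n-1]? = some a := by
    unfold Dialogue.moveAt at h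
    split at h
    · exact absurd h (by simp)
    · exact h
  have := hp _ _ hg
  rwa [Nat.sub_add_cancel h1] at this

theorem moveOK_extend {d : Dialogue} {m : Move} {k : ℕ} {mv : Move}
    (hp : ParticleOK d) (hk : k ≤ d.moves.length + 1) (h : MoveOK d k mv) :
    MoveOK (d.extend m) k mv := by
  obtain ⟨h1, h2, h3, h4⟩ := h
  refine ⟨h1, h2, ?_, ?_⟩
  · intro ha
    obtain ⟨ψ, hψ, hat⟩ := h3 ha
    exact ⟨ψ, by rw [stmtAt_extend_le (by omega)]; exact hψ, hat⟩
  · intro ha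
    obtain ⟨a, χ, hma, haa, hsa, hd⟩ := h4 ha
    have href : a.ref < mv.ref := (particle_moveAt hp hma).1
    have hle := (moveAt_some_le hma).2
    refine ⟨a, χ, ?_, haa, ?_, hd⟩
    · rw [moveAt_extend_le (by omega)]; exact hma
    · rw [stmtAt_extend_le (by omega)]; exact hsa

theorem moveOK_of_extend {d : Dialogue} {m : Move} {k : ℕ} {mv : Move}
    (hp : ParticleOK (d.extend m)) (hk : k ≤ d.moves.length + 1)
    (h : MoveOK (d.extend m) k mv) : MoveOK d k mv := by
  obtain ⟨h1, h2, h3, h4⟩ := h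
  refine ⟨h1, h2, ?_, ?_⟩
  · intro ha
    obtain ⟨ψ, hψ, hat⟩ := h3 ha
    rw [stmtAt_extend_le (by omega)] at hψ
    exact ⟨ψ, hψ, hat⟩
  · intro ha
    obtain ⟨a, χ, hma, haa, hsa, hd⟩ := h4 ha
    have hle : mv.ref ≤ d.moves.length := by
      rcases moveAt_some_le hma with ⟨hz, hle⟩
      rw [moves_extend] at hle
      simp at hle
      by_cases hc : mv.ref ≤ d.moves.length
      · exact hc
      · omega
    have href : a.ref < mv.ref := (particle_moveAt hp hma).1
    rw [moveAt_extend_le hle] at hma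
    rw [stmtAt_extend_le (by omega)] at hsa
    exact ⟨a, χ, hma, haa, hsa, hd⟩

theorem particleOK_extend {d : Dialogue} {m : Move} (hp : ParticleOK d)
    (hm : MoveOK (d.extend m) (d.moves.length + 1) m) : ParticleOK (d.extend m) := by
  intro i mv hi
  show MoveOK (d.extend m) (i+1) mv
  rcases List.getElem?_eq_some_iff.1 hi with ⟨hlt, _⟩
  have hlt2 : i < d.moves.length + 1 := by
    rw [moves_extend] at hlt
    simpa using hlt
  rw [moves_extend] at hi
  by_cases hc : i < d.moves.length
  · rw [List.getElem?_append_left hc] at hi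
    exact moveOK_extend hp (by omega) (hp _ _ hi)
  · have hieq : i = d.moves.length := by omega
    subst hieq
    rw [List.getElem?_append_right (le_refl _)] at hi
    simp at hi
    subst hi
    exact hm

theorem particleOK_of_extend {d : Dialogue} {m : Move}
    (hp : ParticleOK (d.extend m)) : ParticleOK d := by
  intro i mv hi
  have hlt := (List.getElem?_eq_some_iff.1 hi).1
  have hi' : (d.extend m).moves[i]? = some mv := by
    rw [moves_extend, List.getElem?_append_left hlt]
    exact hi
  exact moveOK_of_extend hp (by omega) (hp _ _ hi')

theorem isAttackOn_extend_of {d : Dialogue} {m : Move} {n r : ℕ}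
    (h : IsAttackOn d n r) : IsAttackOn (d.extend m) n r := by
  obtain ⟨mv, hmv, h1, h2⟩ := h
  exact ⟨mv, by rw [moveAt_extend_le (moveAt_some_le hmv).2]; exact hmv, h1, h2⟩

theorem isAttackOn_extend_cases {d : Dialogue} {m : Move} {n r : ℕ}
    (h : IsAttackOn (d.extend m) n r) :
    IsAttackOn d n r ∨ (n = d.moves.length + 1 ∧ m.isAttack = true ∧ m.ref = r) := by
  obtain ⟨mv, hmv, h1, h2⟩ := h
  rcases moveAt_extend_cases hmv with hold | ⟨rfl, rfl⟩
  · exact Or.inl ⟨mv, hold, h1, h2⟩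
  · exact Or.inr ⟨rfl, h1, h2⟩

theorem d13_extend_defense {d : Dialogue} {m : Move} (h13 : D13 d)
    (hdef : m.isAttack = false) : D13 (d.extend m) := by
  intro n₁ n₂ r hr h1 h2
  rcases isAttackOn_extend_cases h1 with h1 | ⟨_, hm, _⟩
  · rcases isAttackOn_extend_cases h2 with h2 | ⟨_, hm, _⟩
    · exact h13 _ _ _ hr h1 h2
    · rw [hm] at hdef; cases hdef
  · rw [hm] at hdef; cases hdef

theorem d13_extend_odd {d : Dialogue} {m : Move} (h13 : D13 d)
    (hodd : m.ref % 2 = 1) : D13 (d.extend m) := by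
  intro n₁ n₂ r hr h1 h2
  have key : ∀ n, IsAttackOn (d.extend m) n r → IsAttackOn d n r := by
    intro n h
    rcases isAttackOn_extend_cases h with h | ⟨_, _, hrr⟩
    · exact h
    · omega
  exact h13 _ _ _ hr (key _ h1) (key _ h2)

theorem d13_extend_fresh {d : Dialogue} {m : Move} (h13 : D13 d)
    (hfresh : ∀ n, ¬ IsAttackOn d n m.ref) : D13 (d.extend m) := by
  intro n₁ n₂ r hr h1 h2
  have key : ∀ n, IsAttackOn (d.extend m) n r →
      IsAttackOn d n r ∨ (n = d.moves.length + 1 ∧ m.ref = r) := by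
    intro n h
    rcases isAttackOn_extend_cases h with h | ⟨he, _, hrr⟩
    · exact Or.inl h
    · exact Or.inr ⟨he, hrr⟩
  rcases key _ h1 with h1' | ⟨he1, hr1⟩
  · rcases key _ h2 with h2' | ⟨he2, hr2⟩
    · exact h13 _ _ _ hr h1' h2'
    · rw [← hr2] at h1'
      exact absurd h1' (hfresh _)
  · rcases key _ h2 with h2' | ⟨he2, hr2⟩
    · rw [← hr1] at h2'
      exact absurd h2' (hfresh _)
    · omega

theorem d10_extend_odd {d : Dialogue} {m : Move} (h10 : D10 d)
    (hodd : (d.moves.length + 1) % 2 = 1) : D10 (d.extend m) := by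
  intro n p hn hs
  rcases stmtAt_extend_cases hs with hold | ⟨rfl, _⟩
  · obtain ⟨j, hj1, hj2, hj3⟩ := h10 _ _ hn hold
    refine ⟨j, hj1, hj2, ?_⟩
    rw [stmtAt_extend_le (by have := stmtAt_some_le hold; omega)]
    exact hj3
  · omega

theorem d10_extend_even {d : Dialogue} {m : Move} (h10 : D10 d)
    (hnew : ∀ p, m.statement = .form (.atom p) →
      ∃ j, j ≤ d.moves.length ∧ j % 2 = 1 ∧ d.stmtAt j = some (.form (.atom p))) :
    D10 (d.extend m) := by
  intro n p hn hs
  rcases stmtAt_extend_cases hs with hold | ⟨rfl, he⟩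
  · obtain ⟨j, hj1, hj2, hj3⟩ := h10 _ _ hn hold
    refine ⟨j, hj1, hj2, ?_⟩
    rw [stmtAt_extend_le (by have := stmtAt_some_le hold; omega)]
    exact hj3
  · obtain ⟨j, hj1, hj2, hj3⟩ := hnew p he.symm
    refine ⟨j, by omega, hj2, ?_⟩
    rw [stmtAt_extend_le hj1]
    exact hj3

/-! ### Concrete game states -/

/-- `χ` has been asserted by O. -/
def OStmt (d : Dialogue) (χ : Formula) : Prop :=
  ∃ n, n % 2 = 1 ∧ d.stmtAt n = some (.form χ)

/-- O has attacked a P-asserted `χ` with the attack `s`. -/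
def ConcAtt (d : Dialogue) (χ : Formula) (s : Statement) : Prop :=
  ∃ n r, n % 2 = 1 ∧ d.moveAt n = some ⟨s, true, r⟩ ∧ d.stmtAt r = some (.form χ)

/-- All P-attacks are attacks on negations. -/
def NPA (d : Dialogue) : Prop :=
  ∀ n mv, n % 2 = 0 → d.moveAt n = some mv → mv.isAttack = true →
    ∃ c, d.stmtAt mv.ref = some (.form (.neg c))

/-- Position `r` has not been attacked. -/
def Unatt (d : Dialogue) (r : ℕ) : Prop := ∀ n, ¬ IsAttackOn d n r

/-- Every unattacked non-atomic P-assertion is at a position in `R`. -/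
def FrontierAt (d : Dialogue) (R : ℕ → Prop) : Prop :=
  ∀ r χ, r % 2 = 0 → d.stmtAt r = some (.form χ) → (∀ p, χ ≠ .atom p) →
    Unatt d r → R r

theorem exists_defense {s : Statement} {χ : Formula} (h : Attacks s χ)
    (hn : ∀ c, χ ≠ .neg c) : ∃ δ, Defends χ s (.form δ) := by
  cases h with
  | andL a b => exact ⟨a, Defends.andL a b⟩
  | andR a b => exact ⟨b, Defends.andR a b⟩
  | qmark a b => exact ⟨a, Defends.orL a b⟩
  | imp a b => exact ⟨b, Defends.imp a b⟩
  | neg a => exact absurd rfl (hn a)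

/-- The spam lemma: if P has attacked an O-asserted non-negation, O can repeat
the corresponding defense forever, so P cannot be winning. -/
theorem spam {d : Dialogue}
    (hw : PWinningC rulesetN (fun _ _ => True) d) :
    ∀ (_ : Legal rulesetN d) (n : ℕ) (mv : Move) (χ : Formula), n % 2 = 0 →
      d.moveAt n = some mv → mv.isAttack = true →
      d.stmtAt mv.ref = some (.form χ) → (∀ c, χ ≠ .neg c) → False := by
  induction hw with
  | pMove d m hturn hm hC hsub ih =>
      intro hL n mv χ hn hmv hatt hs hneg
      have hrefle : mv.ref < n := (particle_moveAt hL.1 hmv).1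
      have hnle : n ≤ d.moves.length := (moveAt_some_le hmv).2
      refine ih hm n mv χ hn ?_ hatt ?_ hneg
      · rw [moveAt_extend_le hnle]; exact hmv
      · rw [stmtAt_extend_le (by omega)]; exact hs
  | oMoves d hturn h ih =>
      intro hL n mv χ hn hmv hatt hs hneg
      have hPOK := hL.1
      have hmOK := particle_moveAt hPOK hmv
      have hrefle : mv.ref < n := hmOK.1
      have hnle : n ≤ d.moves.length := (moveAt_some_le hmv).2
      have hattacks : Attacks mv.statement χ := by
        obtain ⟨ψ, hψ, hat⟩ := hmOK.2.2.1 hatt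
        rw [hs] at hψ
        cases Statement.form.inj (Option.some_inj.1 hψ).symm
        exact hat
      obtain ⟨δ, hδ⟩ := exists_defense hattacks hneg
      have hodd : (d.moves.length + 1) % 2 = 1 := by
        have h' := hturn
        unfold PTurn nextPos at h'
        omega
      have hmdefOK : MoveOK (d.extend ⟨.form δ, false, n⟩)
          (d.moves.length + 1) ⟨.form δ, false, n⟩ := by
        refine ⟨by show n < _; omega, by show n % 2 ≠ _ % 2; omega, ?_, ?_⟩
        · intro hcontra; simp at hcontra
        · intro _
          refine ⟨mv, χ, ?_, hatt, ?_, hδ⟩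
          · rw [moveAt_extend_le hnle]; exact hmv
          · rw [stmtAt_extend_le (by omega)]; exact hs
      have hlex : LegalExt rulesetN d ⟨.form δ, false, n⟩ :=
        ⟨particleOK_extend hPOK hmdefOK,
          d10_extend_odd hL.2.1 hodd, d13_extend_defense hL.2.2 rfl⟩
      refine ih _ hlex hlex n mv χ hn ?_ hatt ?_ hneg
      · rw [moveAt_extend_le hnle]; exact hmv
      · rw [stmtAt_extend_le (by omega)]; exact hs

theorem attacks_not_atom {s : Statement} {χ : Formula} (h : Attacks s χ) :
    ∀ p, χ ≠ .atom p := by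
  cases h <;> intro p hp <;> simp at hp

theorem ostmt_extend {d : Dialogue} {m : Move} {χ : Formula} (h : OStmt d χ) :
    OStmt (d.extend m) χ := by
  obtain ⟨n, hn, hs⟩ := h
  exact ⟨n, hn, by rw [stmtAt_extend_le (stmtAt_some_le hs)]; exact hs⟩

theorem concAtt_extend {d : Dialogue} {m : Move} {χ : Formula} {s : Statement}
    (h : ConcAtt d χ s) : ConcAtt (d.extend m) χ s := by
  obtain ⟨n, r, hn, hmv, hs⟩ := h
  exact ⟨n, r, hn, by rw [moveAt_extend_le (moveAt_some_le hmv).2]; exact hmv,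
    by rw [stmtAt_extend_le (stmtAt_some_le hs)]; exact hs⟩

theorem npa_extend {d : Dialogue} {m : Move} (hNPA : NPA d)
    (hm : (d.moves.length + 1) % 2 = 0 → m.isAttack = true →
      ∃ c, d.stmtAt m.ref = some (.form (.neg c))) : NPA (d.extend m) := by
  intro n mv hn hmv hattack
  rcases moveAt_extend_cases hmv with hold | ⟨rfl, rfl⟩
  · obtain ⟨c, hc⟩ := hNPA n mv hn hold hattack
    exact ⟨c, by rw [stmtAt_extend_le (stmtAt_some_le hc)]; exact hc⟩
  · obtain ⟨c, hc⟩ := hm hn hattack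
    exact ⟨c, by rw [stmtAt_extend_le (stmtAt_some_le hc)]; exact hc⟩

theorem unatt_of_extend {d : Dialogue} {m : Move} {r : ℕ}
    (h : Unatt (d.extend m) r) : Unatt d r :=
  fun n ha => h n (isAttackOn_extend_of ha)

theorem frontier_extend_atom {d : Dialogue} {m : Move} {p : ℕ}
    (hFr : FrontierAt d (fun _ => False)) (hs : m.statement = .form (.atom p)) :
    FrontierAt (d.extend m) (fun _ => False) := by
  intro r χ hr hsr hna hun
  rcases stmtAt_extend_cases hsr with hold | ⟨rfl, he⟩
  · exact hFr r χ hr hold hna (unatt_of_extend hun)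
  · rw [hs] at he
    exact hna p (Statement.form.inj he)

theorem frontier_extend_new {d : Dialogue} {m : Move}
    (hFr : FrontierAt d (fun _ => False)) :
    FrontierAt (d.extend m) (fun r => r = d.moves.length + 1) := by
  intro r χ hr hsr hna hun
  rcases stmtAt_extend_cases hsr with hold | ⟨he, _⟩
  · exact absurd (hFr r χ hr hold hna (unatt_of_extend hun)) (fun h => h)
  · exact he

theorem frontier_extend_attack {d : Dialogue} {m : Move}
    (hFr : FrontierAt d (fun r => r = m.ref)) (hatt : m.isAttack = true)
    (hodd : (d.moves.length + 1) % 2 = 1) :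
    FrontierAt (d.extend m) (fun _ => False) := by
  intro r χ hr hsr hna hun
  rcases stmtAt_extend_cases hsr with hold | ⟨he, _⟩
  · have hre := hFr r χ hr hold hna (unatt_of_extend hun)
    exact hun (d.moves.length + 1) ⟨m, moveAt_extend_eq d m, hatt, hre.symm⟩
  · omega

/-- At O's turn in a reachable position, every legal move of O is a fresh
attack on an unattacked P-assertion. -/
theorem omove_analysis {d : Dialogue} (hL : Legal rulesetN d) (hNPA : NPA d)
    (hlen : d.moves.length % 2 = 0) (m : Move) (hm : LegalExt rulesetN d m) :
    m.isAttack = true ∧ m.ref % 2 = 0 ∧ Unatt d m.ref ∧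
      ∃ χ, d.stmtAt m.ref = some (.form χ) ∧ Attacks m.statement χ := by
  have hPOKe : ParticleOK (d.extend m) := hm.1
  have hmOK : MoveOK (d.extend m) (d.moves.length + 1) m :=
    particle_moveAt hPOKe (moveAt_extend_eq d m)
  have hreflt : m.ref < d.moves.length + 1 := hmOK.1
  have hrefpar : m.ref % 2 = 0 := by
    have := hmOK.2.1
    omega
  cases hattack : m.isAttack with
  | false =>
      exfalso
      obtain ⟨a, χ, hma, haa, hsa, hd⟩ := hmOK.2.2.2 hattack
      have hma' : d.moveAt m.ref = some a := by
        rcases moveAt_extend_cases hma with h | ⟨he, _⟩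
        · exact h
        · omega
      have harl : a.ref < m.ref := (particle_moveAt hL.1 hma').1
      obtain ⟨c, hc⟩ := hNPA m.ref a hrefpar hma' haa
      rw [stmtAt_extend_le (by omega)] at hsa
      rw [hc] at hsa
      cases Statement.form.inj (Option.some_inj.1 hsa)
      cases hd
  | true =>
      obtain ⟨χ, hχ, hat⟩ := hmOK.2.2.1 hattack
      rw [stmtAt_extend_le (by omega)] at hχ
      refine ⟨rfl, hrefpar, ?_, χ, hχ, hat⟩
      intro n₁ hatt₁
      have h1 : IsAttackOn (d.extend m) n₁ m.ref := isAttackOn_extend_of hatt₁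
      have h2 : IsAttackOn (d.extend m) (d.moves.length + 1) m.ref :=
        ⟨m, moveAt_extend_eq d m, hattack, rfl⟩
      have := hm.2.2 _ _ _ hrefpar h1 h2
      obtain ⟨mv₁, hmv₁, -, -⟩ := hatt₁
      have := moveAt_some_le hmv₁
      omega

theorem o_stuck {d : Dialogue} (hL : Legal rulesetN d) (hNPA : NPA d)
    (hlen : d.moves.length % 2 = 0) (hFr : FrontierAt d (fun _ => False)) :
    ∀ m, ¬ LegalExt rulesetN d m := by
  intro m hm
  obtain ⟨hatt, hrp, hun, χ, hs, hatk⟩ := omove_analysis hL hNPA hlen m hm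
  exact hFr _ _ hrp hs (attacks_not_atom hatk) hun

/-- Construction of P's move asserting `f`, given an abstract provider. -/
theorem pmove_legal {d : Dialogue} {A : FPred} {B : BPred}
    (hL : Legal rulesetN d) (hAr : ∀ χ, A χ → OStmt d χ)
    (hBr : ∀ χ s, B χ s → ConcAtt d χ s) (hlen : d.moves.length % 2 = 1)
    (f : Formula) (hprov : Provide A B f)
    (hAatom : ∀ p, f = .atom p → A f) :
    ∃ m : Move, m.statement = .form f ∧ m.ref % 2 = 1 ∧ LegalExt rulesetN d m ∧
      (m.isAttack = true → ∃ c, d.stmtAt m.ref = some (.form (.neg c))) := by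
  obtain ⟨hPOK, h10, h13⟩ := hL
  have hnewatom : ∀ (m : Move), m.statement = .form f → ∀ p,
      m.statement = .form (.atom p) →
      ∃ j, j ≤ d.moves.length ∧ j % 2 = 1 ∧ d.stmtAt j = some (.form (.atom p)) := by
    intro m hms p hmp
    rw [hms] at hmp
    have hfp : f = .atom p := Statement.form.inj hmp
    obtain ⟨j, hj1, hj2⟩ := hAr _ (hAatom p hfp)
    exact ⟨j, by have := stmtAt_some_le hj2; omega, hj1, by rw [← hfp]; exact hj2⟩
  rcases hprov with ⟨χ, s, hb, hd⟩ | hneg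
  · obtain ⟨nn, r, hodd, hmvn, hsr⟩ := hBr _ _ hb
    have hnle : nn ≤ d.moves.length := (moveAt_some_le hmvn).2
    have hrlt : r < nn := by
      have := (particle_moveAt hPOK hmvn).1
      exact this
    refine ⟨⟨.form f, false, nn⟩, rfl, hodd, ?_, ?_⟩
    · have hmOK : MoveOK (d.extend ⟨.form f, false, nn⟩) (d.moves.length + 1)
          ⟨.form f, false, nn⟩ := by
        refine ⟨by show nn < _; omega, by show nn % 2 ≠ _ % 2; omega, ?_, ?_⟩
        · intro hcontra; simp at hcontra
        · intro _
          refine ⟨⟨s, true, r⟩, χ, ?_, rfl, ?_, hd⟩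
          · rw [moveAt_extend_le hnle]; exact hmvn
          · show (d.extend _).stmtAt r = _
            rw [stmtAt_extend_le (by omega)]; exact hsr
      exact ⟨particleOK_extend hPOK hmOK,
        d10_extend_even h10 (hnewatom _ rfl), d13_extend_defense h13 rfl⟩
    · intro hcontra; simp at hcontra
  · obtain ⟨nn, hodd, hsn⟩ := hAr _ hneg
    have hnle : nn ≤ d.moves.length := stmtAt_some_le hsn
    refine ⟨⟨.form f, true, nn⟩, rfl, hodd, ?_, ?_⟩
    · have hmOK : MoveOK (d.extend ⟨.form f, true, nn⟩) (d.moves.length + 1)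
          ⟨.form f, true, nn⟩ := by
        refine ⟨by show nn < _; omega, by show nn % 2 ≠ _ % 2; omega, ?_, ?_⟩
        · intro _
          refine ⟨.neg f, ?_, Attacks.neg f⟩
          show (d.extend _).stmtAt nn = _
          rw [stmtAt_extend_le hnle]; exact hsn
        · intro hcontra; simp at hcontra
      exact ⟨particleOK_extend hPOK hmOK,
        d10_extend_even h10 (hnewatom _ rfl), d13_extend_odd h13 hodd⟩
    · intro _
      exact ⟨f, hsn⟩

/-- The invariant tying an abstract state to a concrete dialogue at P's turn. -/
def PConf (d : Dialogue) (A : FPred) (B : BPred) : Prop :=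
  Legal rulesetN d ∧ NPA d ∧ (∀ χ, A χ → OStmt d χ) ∧
    (∀ χ s, B χ s → ConcAtt d χ s) ∧ d.moves.length % 2 = 1 ∧
    FrontierAt d (fun _ => False)

/-- O's concession when attacking with statement `s`. -/
def AfterA (A : FPred) : Statement → FPred
  | .form a => AddA A a
  | _ => A

theorem realize_core {d : Dialogue} {A : FPred} {B : BPred} {f : Formula}
    (hC : PConf d A B) (hprov : Provide A B f)
    (hAatom : ∀ p, f = .atom p → A f)
    (hcont : ∀ (s : Statement), Attacks s f →
      ∀ d', PConf d' (AfterA A s) (AddB B f s) →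
        PWinningC rulesetN (fun _ _ => True) d') :
    PWinningC rulesetN (fun _ _ => True) d := by
  obtain ⟨hL, hNPA, hAr, hBr, hlen, hFr⟩ := hC
  obtain ⟨m, hms, hmref, hlex, hmneg⟩ := pmove_legal hL hAr hBr hlen f hprov hAatom
  refine PWinningC.pMove d m ?_ hlex trivial ?_
  · show (d.moves.length + 1) % 2 = 0
    omega
  have hlenext : (d.extend m).moves.length = d.moves.length + 1 := by
    rw [moves_extend]; simp
  have hL' : Legal rulesetN (d.extend m) := hlex
  have hNPA' : NPA (d.extend m) := npa_extend hNPA (fun _ ha => hmneg ha)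
  have hlen' : (d.extend m).moves.length % 2 = 0 := by omega
  have hnturn : ¬ PTurn (d.extend m) := by
    show ¬ ((d.extend m).moves.length + 1) % 2 = 0
    omega
  by_cases hatom : ∃ p, f = .atom p
  · obtain ⟨p, rfl⟩ := hatom
    have hFr' : FrontierAt (d.extend m) (fun _ => False) := frontier_extend_atom hFr hms
    exact PWinningC.oMoves _ hnturn
      (fun m' hm' => absurd hm' (o_stuck hL' hNPA' hlen' hFr' m'))
  · have hna : ∀ p, f ≠ .atom p := fun p hp => hatom ⟨p, hp⟩
    have hFr' : FrontierAt (d.extend m) (fun r => r = d.moves.length + 1) :=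
      frontier_extend_new hFr
    refine PWinningC.oMoves _ hnturn (fun m' hm' => ?_)
    obtain ⟨hatt', hrefeven, hunatt, χ, hsχ, hatk⟩ :=
      omove_analysis hL' hNPA' hlen' m' hm'
    have hr : m'.ref = d.moves.length + 1 :=
      hFr' _ _ hrefeven hsχ (attacks_not_atom hatk) hunatt
    have hsf : (d.extend m).stmtAt (d.moves.length + 1) = some (.form f) := by
      rw [stmtAt_extend_eq, hms]
    have hχ : χ = f := by
      rw [hr, hsf] at hsχ
      exact (Statement.form.inj (Option.some_inj.1 hsχ)).symm
    subst hχ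
    refine hcont m'.statement hatk _ ?_
    have hm'eta : m' = ⟨m'.statement, true, d.moves.length + 1⟩ := by
      cases m'
      simp_all
    have hlenext2 : ((d.extend m).extend m').moves.length = d.moves.length + 2 := by
      rw [moves_extend]; simp [hlenext]
    refine ⟨hm', ?_, ?_, ?_, by omega, ?_⟩
    · -- NPA
      refine npa_extend hNPA' (fun he => ?_)
      rw [hlenext] at he
      omega
    · -- A-representation
      intro ξ hξ
      have hmono : ∀ ξ, A ξ → OStmt ((d.extend m).extend m') ξ :=
        fun ξ h => ostmt_extend (ostmt_extend (hAr ξ h))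
      cases hst : m'.statement with
      | form a =>
          rw [hst] at hξ
          rcases hξ with rfl | hξ
          · refine ⟨(d.extend m).moves.length + 1, by omega, ?_⟩
            rw [stmtAt_extend_eq, hst]
          · exact hmono _ hξ
      | qmark => rw [hst] at hξ; exact hmono _ hξ
      | andL => rw [hst] at hξ; exact hmono _ hξ
      | andR => rw [hst] at hξ; exact hmono _ hξ
    · -- B-representation
      intro ξ s hξ
      rcases hξ with ⟨rfl, rfl⟩ | hξ
      · refine ⟨(d.extend m).moves.length + 1, d.moves.length + 1, by omega, ?_, ?_⟩
        · rw [moveAt_extend_eq, ← hm'eta]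
        · rw [stmtAt_extend_le (by omega)]
          exact hsf
      · exact concAtt_extend (concAtt_extend (hBr _ _ hξ))
    · -- frontier empty
      have hFr'' : FrontierAt (d.extend m) (fun r => r = m'.ref) := by
        rw [hr]; exact hFr'
      refine frontier_extend_attack hFr'' hatt' (by omega)

theorem realize {A : FPred} {B : BPred} (hw : Win A B) :
    ∀ d, PConf d A B → PWinningC rulesetN (fun _ _ => True) d := by
  induction hw with
  | watom p hprov hmem =>
      intro d hC
      exact realize_core hC hprov (fun q _ => hmem) (fun s hs => nomatch hs)
  | wand a b hprov _ _ ih1 ih2 =>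
      intro d hC
      refine realize_core hC hprov (fun p hp => by cases hp) ?_
      intro s hs d' hC'
      cases hs with
      | andL => exact ih1 d' hC'
      | andR => exact ih2 d' hC'
  | wor a b hprov _ ih =>
      intro d hC
      refine realize_core hC hprov (fun p hp => by cases hp) ?_
      intro s hs d' hC'
      cases hs with
      | qmark => exact ih d' hC'
  | wimp a b hprov _ ih =>
      intro d hC
      refine realize_core hC hprov (fun p hp => by cases hp) ?_
      intro s hs d' hC'
      cases hs with
      | imp => exact ih d' hC'
  | wneg c hprov _ ih =>
      intro d hC
      refine realize_core hC hprov (fun p hp => by cases hp) ?_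
      intro s hs d' hC'
      cases hs with
      | neg =>
          obtain ⟨h1, h2, h3, h4, h5, h6⟩ := hC'
          exact ih d' ⟨h1, h2, h3, fun ξ s' hb => h4 ξ s' (Or.inr hb), h5, h6⟩

theorem attacks_and_inv {s : Statement} {a b : Formula} (h : Attacks s (.and a b)) :
    s = .andL ∨ s = .andR := by
  cases h
  · exact Or.inl rfl
  · exact Or.inr rfl

theorem attacks_or_inv {s : Statement} {a b : Formula} (h : Attacks s (.or a b)) :
    s = .qmark := by cases h; rfl

theorem attacks_imp_inv {s : Statement} {a b : Formula} (h : Attacks s (.imp a b)) :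
    s = .form a := by cases h; rfl

theorem attacks_neg_inv {s : Statement} {c : Formula} (h : Attacks s (.neg c)) :
    s = .form c := by cases h; rfl

theorem legal_root {θ : Formula} (hna : ∀ p, θ ≠ .atom p) :
    Legal rulesetN (⟨θ, []⟩ : Dialogue) := by
  refine ⟨?_, ?_, ?_⟩
  · intro i m hi
    simp at hi
  · intro n p hn hs
    unfold Dialogue.stmtAt at hs
    split at hs
    · exact absurd (Statement.form.inj (Option.some_inj.1 hs)) (hna p)
    · simp at hs
  · intro n₁ n₂ r hr h1 h2
    obtain ⟨mv, hmv, -, -⟩ := h1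
    unfold Dialogue.moveAt at hmv
    split at hmv
    · simp at hmv
    · simp at hmv

theorem realize_valid {θ : Formula} (habs : AbsValid θ) : valid rulesetN θ := by
  have hna := absValid_not_atom habs
  have hLr := legal_root hna
  refine ⟨hLr, ?_⟩
  have hNPAr : NPA (⟨θ, []⟩ : Dialogue) := by
    intro n mv hn hmv _
    unfold Dialogue.moveAt at hmv
    split at hmv <;> simp at hmv
  refine PWinningC.oMoves ⟨θ, []⟩ ?_ (fun m hm => ?_)
  · simp [PTurn, nextPos]
  obtain ⟨hatt, hrefe, hunatt, χ, hsχ, hatk⟩ := omove_analysis hLr hNPAr rfl m hm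
  have hr0 : m.ref = 0 := by
    have := stmtAt_some_le hsχ
    simp at this
    omega
  have hχθ : χ = θ := by
    rw [hr0] at hsχ
    exact (Statement.form.inj (Option.some_inj.1 hsχ)).symm
  rw [hχθ] at hatk
  clear hsχ
  have hmeta : m = ⟨m.statement, true, 0⟩ := by rw [← hatt, ← hr0]
  have hL1 : Legal rulesetN (Dialogue.extend ⟨θ, []⟩ m) := hm
  have hlen1 : (Dialogue.extend ⟨θ, []⟩ m).moves.length = 1 := rfl
  have hNPA1 : NPA (Dialogue.extend ⟨θ, []⟩ m) := by
    intro n mv hn hmv _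
    rcases moveAt_extend_cases hmv with hold | ⟨he, _⟩
    · unfold Dialogue.moveAt at hold
      split at hold <;> simp at hold
    · simp at he
      omega
  have hmv1 : (Dialogue.extend ⟨θ, []⟩ m).moveAt 1 = some m :=
    moveAt_extend_eq ⟨θ, []⟩ m
  have hstm1 : (Dialogue.extend ⟨θ, []⟩ m).stmtAt 1 = some m.statement :=
    stmtAt_extend_eq ⟨θ, []⟩ m
  have hst0 : (Dialogue.extend ⟨θ, []⟩ m).stmtAt 0 = some (.form θ) :=
    stmtAt_extend_le (by simp)
  have hFr1 : FrontierAt (Dialogue.extend ⟨θ, []⟩ m) (fun _ => False) := by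
    intro r ξ hrp hs hna' hun
    rcases stmtAt_extend_cases hs with hold | ⟨he, _⟩
    · have hr0' : r = 0 := by
        have := stmtAt_some_le hold
        simp at this
        omega
      subst hr0'
      exact hun 1 ⟨m, hmv1, hatt, hr0⟩
    · simp at he
      omega
  have hBnew : ∀ s, m.statement = s →
      ConcAtt (Dialogue.extend ⟨θ, []⟩ m) θ s := by
    intro s hsq
    exact ⟨1, 0, by omega, by rw [hmv1, hmeta, hsq], hst0⟩
  cases θ with
  | atom p => exact absurd rfl (hna p)
  | and a b =>
      rcases attacks_and_inv hatk with hsq | hsq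
      · refine realize habs.1 _ ⟨hL1, hNPA1, fun ξ h => h.elim, ?_, by omega, hFr1⟩
        rintro ξ s (⟨rfl, rfl⟩ | h)
        · exact hBnew _ hsq
        · exact h.elim
      · refine realize habs.2 _ ⟨hL1, hNPA1, fun ξ h => h.elim, ?_, by omega, hFr1⟩
        rintro ξ s (⟨rfl, rfl⟩ | h)
        · exact hBnew _ hsq
        · exact h.elim
  | or a b =>
      have hsq := attacks_or_inv hatk
      refine realize habs _ ⟨hL1, hNPA1, fun ξ h => h.elim, ?_, by omega, hFr1⟩
      rintro ξ s (⟨rfl, rfl⟩ | h)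
      · exact hBnew _ hsq
      · exact h.elim
  | imp a b =>
      have hsq := attacks_imp_inv hatk
      refine realize habs _ ⟨hL1, hNPA1, ?_, ?_, by omega, hFr1⟩
      · rintro ξ (rfl | h)
        · exact ⟨1, by omega, by rw [hstm1, hsq]⟩
        · exact h.elim
      · rintro ξ s (⟨rfl, rfl⟩ | h)
        · exact hBnew _ hsq
        · exact h.elim
  | neg c =>
      have hsq := attacks_neg_inv hatk
      refine realize habs _ ⟨hL1, hNPA1, ?_, fun ξ s h => h.elim, by omega, hFr1⟩
      rintro ξ (rfl | h)
      · exact ⟨1, by omega, by rw [hstm1, hsq]⟩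
      · exact h.elim

theorem attacks_atom_false {s : Statement} {p : ℕ} (h : Attacks s (.atom p)) :
    False := by cases h

theorem defends_form {χ : Formula} {s s' : Statement} (h : Defends χ s s') :
    ∃ δ, s' = .form δ := by
  cases h <;> exact ⟨_, rfl⟩

theorem win_of_branch {f : Formula} {A : FPred} {B : BPred}
    (hprov : Provide A B f) (hna : ∀ p, f ≠ .atom p) (hbr : BranchRes f A B) :
    Win A B := by
  cases f with
  | atom p => exact absurd rfl (hna p)
  | and a b => exact Win.wand a b hprov hbr.1 hbr.2
  | or a b => exact Win.wor a b hprov hbr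
  | imp a b => exact Win.wimp a b hprov hbr
  | neg c => exact Win.wneg c hprov hbr

theorem unatt_top {d : Dialogue} {m : Move} (hp : ParticleOK (d.extend m)) :
    Unatt (d.extend m) (d.moves.length + 1) := by
  intro n ⟨mv, hmv, hattk, hrf⟩
  have h1 := (particle_moveAt hp hmv).1
  have h2 := (moveAt_some_le hmv).2
  rw [moves_extend] at h2
  simp at h2
  omega

theorem ostmt_extend_cases {d : Dialogue} {m : Move} {χ : Formula}
    (h : OStmt (d.extend m) χ) :
    OStmt d χ ∨ ((d.moves.length + 1) % 2 = 1 ∧ m.statement = .form χ) := by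
  obtain ⟨n, hn, hs⟩ := h
  rcases stmtAt_extend_cases hs with hold | ⟨he, hst⟩
  · exact Or.inl ⟨n, hn, hold⟩
  · subst he
    exact Or.inr ⟨hn, hst.symm⟩

theorem concAtt_extend_cases {d : Dialogue} {m : Move} {χ : Formula} {s : Statement}
    (hPOK : ParticleOK d) (h : ConcAtt (d.extend m) χ s) :
    ConcAtt d χ s ∨ ((d.moves.length + 1) % 2 = 1 ∧ m.isAttack = true ∧
      m.statement = s ∧ (d.extend m).stmtAt m.ref = some (.form χ)) := by
  obtain ⟨n, r, hn, hmv, hs⟩ := h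
  rcases moveAt_extend_cases hmv with hold | ⟨he, hmm⟩
  · have hrlt : r < n := (particle_moveAt hPOK hold).1
    have hnle : n ≤ d.moves.length := (moveAt_some_le hold).2
    rw [stmtAt_extend_le (by omega)] at hs
    exact Or.inl ⟨n, r, hn, hold, hs⟩
  · subst he
    subst hmm
    exact Or.inr ⟨hn, rfl, rfl, hs⟩

theorem afterA_le (A : FPred) (s : Statement) : ∀ χ, A χ → AfterA A s χ := by
  cases s <;> intro χ h
  · exact Or.inr h
  · exact h
  · exact h
  · exact h

/-- P wins at P's turn / P wins every continuation at O's turn. -/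
def PBranch (d : Dialogue) : Prop :=
  Legal rulesetN d → NPA d → d.moves.length % 2 = 1 →
    FrontierAt d (fun _ => False) → Win (OStmt d) (ConcAtt d)

def OBranch (d : Dialogue) : Prop :=
  Legal rulesetN d → NPA d → d.moves.length % 2 = 0 →
    ∀ f, FrontierAt d (fun r => r = d.moves.length) →
      d.stmtAt d.moves.length = some (.form f) → (∀ p, f ≠ .atom p) →
      Unatt d d.moves.length → BranchRes f (OStmt d) (ConcAtt d)

theorem extract_assert {d : Dialogue} {m : Move} {δ : Formula}
    (hm : LegalExt rulesetN d m) (hL : Legal rulesetN d) (hNPA : NPA d)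
    (hlen : d.moves.length % 2 = 1) (hFr : FrontierAt d (fun _ => False))
    (hms : m.statement = .form δ)
    (hneg : m.isAttack = true → ∃ c, d.stmtAt m.ref = some (.form (.neg c)))
    (hprov : Provide (OStmt d) (ConcAtt d) δ)
    (ihO : OBranch (d.extend m)) :
    Win (OStmt d) (ConcAtt d) := by
  have hlenext : (d.extend m).moves.length = d.moves.length + 1 := by
    rw [moves_extend]; simp
  by_cases hatom : ∃ p, δ = .atom p
  · obtain ⟨p, rfl⟩ := hatom
    have h10e : D10 (d.extend m) := hm.2.1
    obtain ⟨j, hj1, hj2, hj3⟩ := h10e (d.moves.length + 1) p (by omega)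
      (by rw [stmtAt_extend_eq, hms])
    rw [stmtAt_extend_le (by omega)] at hj3
    exact Win.watom p hprov ⟨j, hj2, hj3⟩
  · have hna : ∀ p, δ ≠ .atom p := fun p hp => hatom ⟨p, hp⟩
    have hbr := ihO hm (npa_extend hNPA (fun _ => hneg)) (by omega)
      δ (by rw [hlenext]; exact frontier_extend_new hFr)
      (by rw [hlenext, stmtAt_extend_eq, hms]) hna
      (by rw [hlenext]; exact unatt_top hm.1)
    refine win_of_branch hprov hna (hbr.mono ?_ ?_)
    · intro χ h
      rcases ostmt_extend_cases h with h | ⟨hpar, _⟩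
      · exact h
      · omega
    · intro χ s h
      rcases concAtt_extend_cases hL.1 h with h | ⟨hpar, _, _, _⟩
      · exact h
      · omega

theorem extract_component {d : Dialogue} {f : Formula} {s : Statement}
    (hL : Legal rulesetN d) (hlen : d.moves.length % 2 = 0)
    (hstm : d.stmtAt d.moves.length = some (.form f))
    (W : Win (OStmt (d.extend ⟨s, true, d.moves.length⟩))
      (ConcAtt (d.extend ⟨s, true, d.moves.length⟩))) :
    Win (AfterA (OStmt d) s) (AddB (ConcAtt d) f s) := by
  refine W.mono ?_ ?_
  · intro χ hχ
    rcases ostmt_extend_cases hχ with h | ⟨_, hstq⟩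
    · exact afterA_le _ _ _ h
    · have hstq' : s = .form χ := hstq
      rw [hstq']
      exact Or.inl rfl
  · intro χ s' hχ
    rcases concAtt_extend_cases hL.1 hχ with h | ⟨_, _, hstq, hrefst⟩
    · exact Or.inr h
    · have hs' : s = s' := hstq
      have hrf : (d.extend ⟨s, true, d.moves.length⟩).stmtAt d.moves.length =
          some (.form χ) := hrefst
      rw [stmtAt_extend_le (le_refl _), hstm] at hrf
      have hχf : χ = f := (Statement.form.inj (Option.some_inj.1 hrf)).symm
      exact Or.inl ⟨hχf, hs'.symm⟩

theorem extract {d : Dialogue} (hw : PWinningC rulesetN (fun _ _ => True) d) :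
    PBranch d ∧ OBranch d := by
  induction hw with
  | pMove d m hturn hm _ hsub ih =>
      constructor
      · intro hL hNPA hlen hFr
        have hPOKe : ParticleOK (d.extend m) := hm.1
        have hmOK := particle_moveAt hPOKe (moveAt_extend_eq d m)
        cases hattk : m.isAttack with
        | true =>
            obtain ⟨ψ, hψ, hat⟩ := hmOK.2.2.1 hattk
            have hreflt : m.ref < d.moves.length + 1 := hmOK.1
            have hrefodd : m.ref % 2 = 1 := by
              have := hmOK.2.1
              omega
            rw [stmtAt_extend_le (by omega)] at hψ
            have hψe : (d.extend m).stmtAt m.ref = some (.form ψ) := by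
              rw [stmtAt_extend_le (by omega)]; exact hψ
            cases ψ with
            | atom q => exact (attacks_atom_false hat).elim
            | and a b =>
                exact (spam hsub hm (d.moves.length + 1) m (.and a b) (by omega)
                  (moveAt_extend_eq d m) hattk hψe (by simp)).elim
            | or a b =>
                exact (spam hsub hm (d.moves.length + 1) m (.or a b) (by omega)
                  (moveAt_extend_eq d m) hattk hψe (by simp)).elim
            | imp a b =>
                exact (spam hsub hm (d.moves.length + 1) m (.imp a b) (by omega)
                  (moveAt_extend_eq d m) hattk hψe (by simp)).elim
            | neg c =>
                exact extract_assert hm hL hNPA hlen hFr (attacks_neg_inv hat)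
                  (fun _ => ⟨c, hψ⟩) (Or.inr ⟨m.ref, hrefodd, hψ⟩) ih.2
        | false =>
            obtain ⟨a, χ, hma, haa, hsa, hd⟩ := hmOK.2.2.2 hattk
            have hreflt : m.ref < d.moves.length + 1 := hmOK.1
            have hma' : d.moveAt m.ref = some a := by
              rcases moveAt_extend_cases hma with h | ⟨he, _⟩
              · exact h
              · omega
            have hrefodd : m.ref % 2 = 1 := by
              have := hmOK.2.1
              omega
            have harlt : a.ref < m.ref := (particle_moveAt hL.1 hma').1
            rw [stmtAt_extend_le (by omega)] at hsa
            obtain ⟨δ, hδe⟩ := defends_form hd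
            have haeta : a = ⟨a.statement, true, a.ref⟩ := by rw [← haa]
            refine extract_assert hm hL hNPA hlen hFr hδe
              (fun hc => by rw [hattk] at hc; simp at hc)
              (Or.inl ⟨χ, a.statement,
                ⟨m.ref, a.ref, hrefodd, by rw [hma', ← haeta], hsa⟩,
                hδe ▸ hd⟩) ih.2
      · intro hL hNPA hlen f hFr hstm hfna hunatt
        have hpt : (d.moves.length + 1) % 2 = 0 := hturn
        exact absurd hpt (by omega)
  | oMoves d hturn h ih =>
      constructor
      · intro hL hNPA hlen hFr
        exact absurd (show (d.moves.length + 1) % 2 = 0 by omega) hturn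
      · intro hL hNPA hlen f hFr hstm hfna hunatt
        have hmkOK : ∀ s : Statement, Attacks s f →
            LegalExt rulesetN d ⟨s, true, d.moves.length⟩ := by
          intro s hatk
          have hstmle : d.moves.length ≤ d.moves.length := le_refl _
          have hmOK : MoveOK (d.extend ⟨s, true, d.moves.length⟩)
              (d.moves.length + 1) ⟨s, true, d.moves.length⟩ := by
            refine ⟨by show d.moves.length < d.moves.length + 1; omega,
              by show d.moves.length % 2 ≠ (d.moves.length + 1) % 2; omega, ?_, ?_⟩
            · intro _
              exact ⟨f, by rw [stmtAt_extend_le hstmle]; exact hstm, hatk⟩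
            · intro hcontra; simp at hcontra
          exact ⟨particleOK_extend hL.1 hmOK, d10_extend_odd hL.2.1 (by omega),
            d13_extend_fresh hL.2.2 hunatt⟩
        have hstep : ∀ s : Statement, Attacks s f →
            Win (AfterA (OStmt d) s) (AddB (ConcAtt d) f s) := by
          intro s hatk
          have hlex := hmkOK s hatk
          refine extract_component hL hlen hstm ((ih _ hlex).1 hlex
            (npa_extend hNPA (fun he => absurd he (by omega))) ?_ ?_)
          · rw [moves_extend]; simp; omega
          · have := frontier_extend_attack (m := ⟨s, true, d.moves.length⟩)
              hFr rfl (by omega)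
            exact this
        cases f with
        | atom p => exact absurd rfl (hfna p)
        | and a b =>
            exact ⟨hstep .andL (Attacks.andL a b), hstep .andR (Attacks.andR a b)⟩
        | or a b => exact hstep .qmark (Attacks.qmark a b)
        | imp a b => exact hstep (.form a) (Attacks.imp a b)
        | neg c =>
            have W := hstep (.form c) (Attacks.neg c)
            refine W.dropB ?_
            intro ξ s hξ hdef
            rcases hξ with ⟨rfl, rfl⟩ | hξ
            · obtain ⟨g, hg⟩ := hdef
              cases hg
            · exact hξ

theorem extract_valid {θ : Formula} (hv : valid rulesetN θ) : AbsValid θ := by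
  obtain ⟨hL, hw⟩ := hv
  have hna : ∀ p, θ ≠ .atom p := by
    intro p hp
    obtain ⟨j, hj, -, -⟩ := hL.2.1 0 p rfl (by subst hp; rfl)
    omega
  have hNPAr : NPA (⟨θ, []⟩ : Dialogue) := by
    intro n mv hn hmv _
    unfold Dialogue.moveAt at hmv
    split at hmv <;> simp at hmv
  have hOB := (extract hw).2 hL hNPAr rfl θ ?_ rfl hna ?_
  · refine hOB.mono ?_ ?_
    · intro χ hχ
      obtain ⟨n, hodd, hs⟩ := hχ
      have := stmtAt_some_le hs
      simp at this
      omega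
    · intro χ s hχ
      obtain ⟨n, r, hodd, hmv, -⟩ := hχ
      unfold Dialogue.moveAt at hmv
      split at hmv <;> simp at hmv
  · intro r χ hr hs _ _
    have hle := stmtAt_some_le hs
    simp at hle ⊢
    omega
  · intro n hatk
    obtain ⟨mv, hmv, -, -⟩ := hatk
    unfold Dialogue.moveAt at hmv
    split at hmv <;> simp at hmv

end NMP
/-- The set of N-valid formulas is closed under modus ponens. -/
theorem N_modus_ponens (φ ψ : Formula)
    (h₁ : valid rulesetN φ) (h₂ : valid rulesetN (.imp φ ψ)) :
    valid rulesetN ψ :=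
  NMP.realize_valid (NMP.absMP (NMP.extract_valid h₁) (NMP.extract_valid h₂))

end LorenzenDialogues
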